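/- Let b ≥ 2 and 1 ≤ r ≤ 2^{b−1}. Let h : [u] → [2^b] be a 4-universal random hash function, and define for each key x: j_x = h(x) mod 2^{b−1}, i(x) = ⌊r · j_x / 2^{b−1}⌋, a_x = ⌊h(x)/2^{b−1}⌋, and s(x) = 2·a_x − 1 ∈ {−1,1}. Then for any values f : [u] → ℤ, the Count Sketch estimator X satisfies E[X] = F₂ and Var[X] ≤ 2(F₂² − F₄)(1 + (r/2^b)²)/r ≤ 2F₂²(1 + (r/2^b)²)/r, where F₂ = Σ_x f(x)² and F₄ = Σ_x f(x)⁴. -/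

import Mathlib

open MeasureTheory ProbabilityTheory

namespace CS19

def Ifun (r m a : ℕ) : ℕ := r * (a % m) / m
noncomputable def Sfun (m a : ℕ) : ℝ := 2 * ((a / m : ℕ) : ℝ) - 1
def dfun (r m j : ℕ) : ℕ := (j * m + r - 1) / r
def Cfun (r m j : ℕ) : ℕ := ((Finset.range m).filter (fun k => r * k / m = j)).card
noncomputable def Gfun (r m : ℕ) (a c : ℕ) : ℝ :=
  Sfun m a * Sfun m c * (if Ifun r m a = Ifun r m c then 1 else 0)

lemma Ifun_lt {r m : ℕ} (hr : 1 ≤ r) (hm : 0 < m) (a : ℕ) : Ifun r m a < r := by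
  have h1 : a % m < m := Nat.mod_lt _ hm
  have h2 : r * (a % m) < m * r := by nlinarith
  exact Nat.div_lt_of_lt_mul h2

lemma Sfun_sq {m : ℕ} {a : ℕ} (ha : a < 2 * m) : Sfun m a * Sfun m a = 1 := by
  have h2 : a / m < 2 := Nat.div_lt_of_lt_mul (by omega)
  interval_cases h : a / m <;> simp [Sfun, h] <;> norm_num

lemma dfun_le_iff {r m : ℕ} (hr : 1 ≤ r) (j k : ℕ) : dfun r m j ≤ k ↔ j * m ≤ r * k := by
  rw [dfun, Nat.div_le_iff_le_mul_add_pred (by omega)]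
  have : r * k = k * r := Nat.mul_comm _ _
  omega

lemma lt_dfun_iff {r m : ℕ} (hr : 1 ≤ r) (j k : ℕ) : k < dfun r m j ↔ r * k < j * m := by
  rw [← Nat.not_le, ← Nat.not_le, dfun_le_iff hr]

lemma r_dfun_le {r m : ℕ} (hr : 1 ≤ r) (j : ℕ) : r * dfun r m j ≤ j * m + r - 1 := by
  have := Nat.div_mul_le_self (j * m + r - 1) r
  calc r * dfun r m j = dfun r m j * r := Nat.mul_comm _ _
  _ ≤ j * m + r - 1 := this

lemma le_r_dfun {r m : ℕ} (hr : 1 ≤ r) (j : ℕ) : j * m ≤ r * dfun r m j :=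
  (dfun_le_iff hr j _).1 le_rfl

lemma filter_eq {r m : ℕ} (hr : 1 ≤ r) (hm : 0 < m) {j : ℕ} (hj : j < r) :
    (Finset.range m).filter (fun k => r * k / m = j) = Finset.Ico (dfun r m j) (dfun r m (j+1)) := by
  ext k
  simp only [Finset.mem_filter, Finset.mem_range, Finset.mem_Ico]
  constructor
  · rintro ⟨hk, he⟩
    constructor
    · rw [dfun_le_iff hr]
      calc j * m = (r * k / m) * m := by rw [he]
      _ ≤ r * k := Nat.div_mul_le_self _ _
    · rw [lt_dfun_iff hr]
      have h3 : r * k / m < j + 1 := by omega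
      have := (Nat.div_lt_iff_lt_mul hm).1 h3
      have h4 : (j+1) * m = m * (j+1) := Nat.mul_comm _ _
      omega
  · rintro ⟨h1, h2⟩
    rw [dfun_le_iff hr] at h1
    rw [lt_dfun_iff hr] at h2
    have hkm : k < m := by
      by_contra hc
      push_neg at hc
      have h5 : r * m ≤ r * k := Nat.mul_le_mul_left r hc
      have h6 : (j+1) * m ≤ r * m := Nat.mul_le_mul_right m (by omega)
      omega
    exact ⟨hkm, Nat.div_eq_of_lt_le h1 h2⟩

lemma Cfun_eq {r m : ℕ} (hr : 1 ≤ r) (hm : 0 < m) {j : ℕ} (hj : j < r) :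
    Cfun r m j = dfun r m (j+1) - dfun r m j := by
  rw [Cfun, filter_eq hr hm hj, Nat.card_Ico]

lemma Cfun_bounds {r m : ℕ} (hr : 1 ≤ r) (hm : 0 < m) {j : ℕ} (hj : j < r) :
    m / r ≤ Cfun r m j ∧ Cfun r m j ≤ m / r + 1 := by
  obtain ⟨q, hq⟩ : ∃ q, m / r = q := ⟨_, rfl⟩
  rw [hq]
  have hqr : q * r ≤ m := hq ▸ Nat.div_mul_le_self m r
  have hqr2 : m < q * r + r := by
    have h0 := Nat.div_add_mod m r
    rw [hq] at h0
    have h1 : m % r < r := Nat.mod_lt _ (by omega)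
    have : r * q = q * r := Nat.mul_comm _ _
    omega
  have hdj1 : j * m ≤ r * dfun r m j := le_r_dfun hr j
  have hdj2 : r * dfun r m j ≤ j * m + r - 1 := r_dfun_le hr j
  have hdj1' : (j+1) * m ≤ r * dfun r m (j+1) := le_r_dfun hr (j+1)
  have hjm : (j+1) * m = j * m + m := by ring
  have upper : dfun r m (j+1) ≤ dfun r m j + q + 1 := by
    rw [dfun_le_iff hr]
    have he : r * (dfun r m j + q + 1) = r * dfun r m j + q * r + r := by ring
    omega
  have lower : dfun r m j + q ≤ dfun r m (j+1) := by
    rcases Nat.eq_zero_or_pos q with hq0 | hq0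
    · have : dfun r m j ≤ dfun r m (j+1) := by
        apply Nat.div_le_div_right
        have : j * m ≤ (j+1) * m := Nat.mul_le_mul_right m (by omega)
        omega
      omega
    · have hlt : dfun r m j + q - 1 < dfun r m (j+1) := by
        rw [lt_dfun_iff hr]
        have he : r * (dfun r m j + (q - 1)) = r * dfun r m j + r * (q-1) := by ring
        have he2 : r * (q - 1) = r * q - r := by
          rw [Nat.mul_sub, Nat.mul_one]
        have he3 : r * q = q * r := Nat.mul_comm _ _
        have he4 : dfun r m j + q - 1 = dfun r m j + (q - 1) := by omega
        have he5 : r * (dfun r m j + q - 1) = r * dfun r m j + r * (q - 1) := by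
          rw [he4]; ring
        have hrq : r ≤ r * q := Nat.le_mul_of_pos_right r hq0
        calc r * (dfun r m j + q - 1) = r * dfun r m j + r * (q - 1) := he5
        _ < (j + 1) * m := by omega
      omega
  rw [Cfun_eq hr hm hj]
  omega

lemma sum_Cfun {r m : ℕ} (hr : 1 ≤ r) (hm : 0 < m) :
    ∑ j ∈ Finset.range r, Cfun r m j = m := by
  have hmem : ∀ k ∈ Finset.range m, r * k / m ∈ Finset.range r := by
    intro k hk
    simp only [Finset.mem_range] at *
    have := Ifun_lt hr hm k
    rwa [Ifun, Nat.mod_eq_of_lt hk] at this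
  have := Finset.card_eq_sum_card_fiberwise hmem
  rw [Finset.card_range] at this
  simp only [Cfun]
  exact this.symm

/-- The key numeric bound: `∑ C_j² ≤ m²/r + r/4`. -/
lemma sum_Cfun_sq_le {r m : ℕ} (hr : 1 ≤ r) (hm : 0 < m) :
    ∑ j ∈ Finset.range r, ((Cfun r m j : ℝ))^2 ≤ (m:ℝ)^2 / r + r / 4 := by
  set q := m / r with hq
  have hsum : ∑ j ∈ Finset.range r, ((Cfun r m j : ℝ)) = m := by
    rw [← Nat.cast_sum, sum_Cfun hr hm]
  have hptw : ∀ j ∈ Finset.range r,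
      ((Cfun r m j : ℝ))^2 = (2*q+1) * (Cfun r m j) - q*(q+1) := by
    intro j hj
    simp only [Finset.mem_range] at hj
    obtain ⟨h1, h2⟩ := Cfun_bounds hr hm hj
    have : Cfun r m j = q ∨ Cfun r m j = q + 1 := by omega
    rcases this with h | h <;> rw [h] <;> push_cast <;> ring
  rw [Finset.sum_congr rfl hptw, Finset.sum_sub_distrib, ← Finset.mul_sum, hsum,
    Finset.sum_const, Finset.card_range, nsmul_eq_mul]
  have hqr : (q:ℝ) * r ≤ m := by exact_mod_cast Nat.div_mul_le_self m r
  have hqr2 : (m:ℝ) < q * r + r := by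
    have h0 := Nat.div_add_mod m r
    have h1 : m % r < r := Nat.mod_lt _ (by omega)
    have : (m:ℝ) = r * q + (m % r : ℕ) := by exact_mod_cast h0.symm
    have h2 : ((m % r : ℕ) : ℝ) < r := by exact_mod_cast h1
    nlinarith
  have hrpos : (0:ℝ) < r := by exact_mod_cast hr
  rw [div_add_div _ _ (ne_of_gt hrpos) (by norm_num), le_div_iff₀ (by positivity)]
  nlinarith [sq_nonneg (2*((m:ℝ) - r*q) - r)]

end CS19

namespace CS19

lemma sum_double {m : ℕ} (F : ℕ → ℝ) :
    ∑ a ∈ Finset.range (2*m), F a = ∑ k ∈ Finset.range m, (F k + F (m + k)) := by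
  have h1 := Finset.sum_Ico_consecutive F (Nat.zero_le m) (show m ≤ 2*m by omega)
  have h2 : ∑ i ∈ Finset.Ico m (2*m), F i = ∑ k ∈ Finset.range m, F (m + k) := by
    rw [Finset.sum_Ico_eq_sum_range]
    have h0 : 2*m - m = m := by omega
    rw [h0]
  calc ∑ a ∈ Finset.range (2*m), F a = ∑ a ∈ Finset.Ico 0 (2*m), F a := by
        rw [Finset.range_eq_Ico]
  _ = ∑ i ∈ Finset.Ico 0 m, F i + ∑ i ∈ Finset.Ico m (2*m), F i := h1.symm
  _ = ∑ k ∈ Finset.range m, F k + ∑ k ∈ Finset.range m, F (m + k) := by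
        rw [← Finset.range_eq_Ico, h2]
  _ = ∑ k ∈ Finset.range m, (F k + F (m + k)) := (Finset.sum_add_distrib).symm

lemma sum_S_mul {r m : ℕ} (hm : 0 < m) (F : ℕ → ℝ) :
    ∑ a ∈ Finset.range (2*m), Sfun m a * F (Ifun r m a) = 0 := by
  rw [sum_double]
  apply Finset.sum_eq_zero
  intro k hk
  simp only [Finset.mem_range] at hk
  have e1 : Sfun m k = -1 := by simp [Sfun, Nat.div_eq_of_lt hk]
  have e2 : Sfun m (m + k) = 1 := by
    have h3 : (m + k) / m = 1 := by
      rw [Nat.add_comm, Nat.add_div_right _ hm, Nat.div_eq_of_lt hk]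
    rw [Sfun, h3]
    norm_num
  have e3 : Ifun r m (m + k) = Ifun r m k := by
    simp [Ifun, Nat.add_mod_left]
  rw [e1, e2, e3]; ring

lemma sum_F_mod {m : ℕ} (F : ℕ → ℝ) :
    ∑ a ∈ Finset.range (2*m), F (a % m) = 2 * ∑ k ∈ Finset.range m, F k := by
  rw [sum_double, Finset.mul_sum]
  apply Finset.sum_congr rfl
  intro k hk
  simp only [Finset.mem_range] at hk
  rw [Nat.add_mod_left, Nat.mod_eq_of_lt hk]
  ring

lemma double_count {r m : ℕ} (hr : 1 ≤ r) (hm : 0 < m) :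
    ∑ a ∈ Finset.range (2*m), ∑ c ∈ Finset.range (2*m),
      (if Ifun r m a = Ifun r m c then (1:ℝ) else 0)
    = 4 * ∑ j ∈ Finset.range r, ((Cfun r m j : ℝ))^2 := by
  have step1 : ∀ a, (∑ c ∈ Finset.range (2*m), if Ifun r m a = Ifun r m c then (1:ℝ) else 0)
      = 2 * ∑ k' ∈ Finset.range m, (if Ifun r m a = r * k' / m then (1:ℝ) else 0) := by
    intro a
    have := sum_F_mod (m := m) (fun t => if Ifun r m a = r * t / m then (1:ℝ) else 0)
    exact this
  rw [Finset.sum_congr rfl (fun a _ => step1 a), ← Finset.mul_sum]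
  have step2 : ∑ a ∈ Finset.range (2*m), ∑ k' ∈ Finset.range m,
      (if Ifun r m a = r * k' / m then (1:ℝ) else 0)
      = 2 * ∑ k ∈ Finset.range m, ∑ k' ∈ Finset.range m,
        (if r * k / m = r * k' / m then (1:ℝ) else 0) := by
    have := sum_F_mod (m := m) (fun t => ∑ k' ∈ Finset.range m,
      (if r * t / m = r * k' / m then (1:ℝ) else 0))
    exact this
  rw [step2]
  have step3 : ∑ k ∈ Finset.range m, ∑ k' ∈ Finset.range m,
      (if r * k / m = r * k' / m then (1:ℝ) else 0)
      = ∑ j ∈ Finset.range r, ((Cfun r m j : ℝ))^2 := by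
    have hek : ∀ k < m, r * k / m < r := by
      intro k hk
      have := Ifun_lt hr hm k
      rwa [Ifun, Nat.mod_eq_of_lt hk] at this
    calc ∑ k ∈ Finset.range m, ∑ k' ∈ Finset.range m,
        (if r * k / m = r * k' / m then (1:ℝ) else 0)
        = ∑ k ∈ Finset.range m, ∑ k' ∈ Finset.range m, ∑ j ∈ Finset.range r,
            (if r * k / m = j then (1:ℝ) else 0) * (if r * k' / m = j then (1:ℝ) else 0) := by
          apply Finset.sum_congr rfl; intro k hk
          apply Finset.sum_congr rfl; intro k' hk'
          simp only [Finset.mem_range] at hk hk'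
          rw [Finset.sum_eq_single_of_mem (r * k / m) (Finset.mem_range.2 (hek k hk))]
          · by_cases hc : r * k / m = r * k' / m <;> simp [hc, eq_comm]
          · intro j hj hne
            simp [Ne.symm hne]
    _ = ∑ k ∈ Finset.range m, ∑ j ∈ Finset.range r, ∑ k' ∈ Finset.range m,
            (if r * k / m = j then (1:ℝ) else 0) * (if r * k' / m = j then (1:ℝ) else 0) := by
          apply Finset.sum_congr rfl; intro k hk
          exact Finset.sum_comm
    _ = ∑ j ∈ Finset.range r, ∑ k ∈ Finset.range m, ∑ k' ∈ Finset.range m,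
            (if r * k / m = j then (1:ℝ) else 0) * (if r * k' / m = j then (1:ℝ) else 0) :=
          Finset.sum_comm
    _ = ∑ j ∈ Finset.range r, (∑ k ∈ Finset.range m, if r * k / m = j then (1:ℝ) else 0)
          * (∑ k' ∈ Finset.range m, if r * k' / m = j then (1:ℝ) else 0) := by
          apply Finset.sum_congr rfl; intro j hj
          exact (Finset.sum_mul_sum _ _ _ _).symm
    _ = ∑ j ∈ Finset.range r, ((Cfun r m j : ℝ))^2 := by
          apply Finset.sum_congr rfl; intro j hj
          have hb : (∑ k ∈ Finset.range m, if r * k / m = j then (1:ℝ) else 0)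
              = ((Cfun r m j : ℝ)) := by
            rw [Finset.sum_boole, Cfun]
          rw [hb]; ring
  rw [step3]; ring


section Prob
variable {Ω : Type*} [MeasureSpace Ω] [IsProbabilityMeasure (ℙ : Measure Ω)]
variable {b u : ℕ} {h : Ω → Fin u → Fin (2 ^ b)}

lemma inj2 {x y : Fin u} (hxy : x ≠ y) : Function.Injective ![x, y] := by
  intro a c hac
  fin_cases a <;> fin_cases c <;> simp_all

lemma toReal_pow_inv (b j : ℕ) :
    (((2 ^ b : ℕ) : ENNReal)⁻¹ ^ j).toReal = ((2 ^ b : ℝ))⁻¹ ^ j := by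
  rw [ENNReal.toReal_pow, ENNReal.toReal_inv]
  norm_num

lemma measurable_comp4 (hmeas : ∀ x : Fin u, Measurable fun ω => h ω x)
    (x y z w : Fin u) (g : Fin (2^b) → Fin (2^b) → Fin (2^b) → Fin (2^b) → ℝ) :
    Measurable (fun ω => g (h ω x) (h ω y) (h ω z) (h ω w)) := by
  have hp : Measurable (fun ω => (((h ω x, h ω y), h ω z), h ω w)) :=
    (((hmeas x).prodMk (hmeas y)).prodMk (hmeas z)).prodMk (hmeas w)
  exact (measurable_of_countable
    (fun p : ((Fin (2^b) × Fin (2^b)) × Fin (2^b)) × Fin (2^b) =>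
      g p.1.1.1 p.1.1.2 p.1.2 p.2)).comp hp

lemma integrable_comp4 (hmeas : ∀ x : Fin u, Measurable fun ω => h ω x)
    (x y z w : Fin u) (g : Fin (2^b) → Fin (2^b) → Fin (2^b) → Fin (2^b) → ℝ) :
    Integrable (fun ω => g (h ω x) (h ω y) (h ω z) (h ω w)) := by
  set C : ℝ := ∑ p : ((Fin (2^b) × Fin (2^b)) × Fin (2^b)) × Fin (2^b),
    |g p.1.1.1 p.1.1.2 p.1.2 p.2| with hC
  apply (integrable_const C).mono'
    (measurable_comp4 hmeas x y z w g).aestronglyMeasurable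
  filter_upwards with ω
  rw [Real.norm_eq_abs]
  exact Finset.single_le_sum (f := fun p : ((Fin (2^b) × Fin (2^b)) × Fin (2^b)) × Fin (2^b) =>
    |g p.1.1.1 p.1.1.2 p.1.2 p.2|) (fun p _ => abs_nonneg _)
    (Finset.mem_univ (((h ω x, h ω y), h ω z), h ω w))

lemma integral_pair (hmeas : ∀ x : Fin u, Measurable fun ω => h ω x)
    (huniv : ∀ j : ℕ, j ≤ 4 → ∀ x : Fin j → Fin u, Function.Injective x →
      ∀ y : Fin j → Fin (2 ^ b),
        ℙ {ω | ∀ m : Fin j, h ω (x m) = y m} = ((2 ^ b : ℕ) : ENNReal)⁻¹ ^ j)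
    {x y : Fin u} (hxy : x ≠ y) (g : Fin (2^b) → Fin (2^b) → ℝ) :
    ∫ ω, g (h ω x) (h ω y) = ((2^b : ℝ))⁻¹ ^ 2 * ∑ a : Fin (2^b), ∑ c : Fin (2^b), g a c := by
  have hptw : ∀ ω, g (h ω x) (h ω y) =
      ∑ p : Fin (2^b) × Fin (2^b), (if h ω x = p.1 ∧ h ω y = p.2 then g p.1 p.2 else 0) := by
    intro ω
    rw [Finset.sum_eq_single_of_mem (h ω x, h ω y) (Finset.mem_univ _)]
    · simp
    · intro p _ hne
      rw [if_neg]
      rintro ⟨h1, h2⟩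
      apply hne
      apply Prod.ext <;> simp [h1.symm, h2.symm]
  simp_rw [hptw]
  have hmeasA : ∀ p : Fin (2^b) × Fin (2^b),
      MeasurableSet {ω | h ω x = p.1 ∧ h ω y = p.2} :=
    fun p => ((hmeas x) (measurableSet_singleton p.1)).inter
      ((hmeas y) (measurableSet_singleton p.2))
  rw [integral_finset_sum]
  · have hterm : ∀ p : Fin (2^b) × Fin (2^b),
        (∫ ω, if h ω x = p.1 ∧ h ω y = p.2 then g p.1 p.2 else 0) =
          ((2^b : ℝ))⁻¹ ^ 2 * g p.1 p.2 := by
      intro p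
      have hind : (fun ω => if h ω x = p.1 ∧ h ω y = p.2 then g p.1 p.2 else 0) =
          Set.indicator {ω | h ω x = p.1 ∧ h ω y = p.2} (fun _ => g p.1 p.2) := by
        funext ω
        rw [Set.indicator_apply]
        rfl
      rw [hind, integral_indicator_const _ (hmeasA p)]
      have hset : {ω | h ω x = p.1 ∧ h ω y = p.2} =
          {ω | ∀ m : Fin 2, h ω (![x, y] m) = ![p.1, p.2] m} := by
        ext ω
        simp [Fin.forall_fin_two]
      rw [hset, measureReal_def, huniv 2 (by norm_num) ![x, y] (inj2 hxy) ![p.1, p.2], toReal_pow_inv b 2,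
        smul_eq_mul]
    rw [Finset.sum_congr rfl (fun p _ => hterm p), ← Finset.mul_sum, Fintype.sum_prod_type]
  · intro p _
    have hind : (fun ω => if h ω x = p.1 ∧ h ω y = p.2 then g p.1 p.2 else 0) =
        Set.indicator {ω | h ω x = p.1 ∧ h ω y = p.2} (fun _ => g p.1 p.2) := by
      funext ω
      rw [Set.indicator_apply]
      rfl
    rw [hind]
    exact (integrable_const _).indicator (hmeasA p)

lemma inj3 {x y z : Fin u} (hxy : x ≠ y) (hxz : x ≠ z) (hyz : y ≠ z) :
    Function.Injective ![x, y, z] := by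
  intro a c hac
  fin_cases a <;> fin_cases c <;> simp_all

lemma inj4 {x y z w : Fin u} (hxy : x ≠ y) (hxz : x ≠ z) (hxw : x ≠ w)
    (hyz : y ≠ z) (hyw : y ≠ w) (hzw : z ≠ w) :
    Function.Injective ![x, y, z, w] := by
  intro a c hac
  fin_cases a <;> fin_cases c <;> simp_all

lemma integral_triple (hmeas : ∀ x : Fin u, Measurable fun ω => h ω x)
    (huniv : ∀ j : ℕ, j ≤ 4 → ∀ x : Fin j → Fin u, Function.Injective x →
      ∀ y : Fin j → Fin (2 ^ b),
        ℙ {ω | ∀ m : Fin j, h ω (x m) = y m} = ((2 ^ b : ℕ) : ENNReal)⁻¹ ^ j)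
    {x y z : Fin u} (hxy : x ≠ y) (hxz : x ≠ z) (hyz : y ≠ z)
    (g : Fin (2^b) → Fin (2^b) → Fin (2^b) → ℝ) :
    ∫ ω, g (h ω x) (h ω y) (h ω z)
      = ((2^b : ℝ))⁻¹ ^ 3 * ∑ a : Fin (2^b), ∑ c : Fin (2^b), ∑ e : Fin (2^b), g a c e := by
  have hptw : ∀ ω, g (h ω x) (h ω y) (h ω z) =
      ∑ p : (Fin (2^b) × Fin (2^b)) × Fin (2^b),
        (if h ω x = p.1.1 ∧ h ω y = p.1.2 ∧ h ω z = p.2 then g p.1.1 p.1.2 p.2 else 0) := by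
    intro ω
    rw [Finset.sum_eq_single_of_mem ((h ω x, h ω y), h ω z) (Finset.mem_univ _)]
    · simp
    · intro p _ hne
      rw [if_neg]
      rintro ⟨h1, h2, h3⟩
      apply hne
      apply Prod.ext
      · apply Prod.ext <;> simp [h1.symm, h2.symm]
      · simp [h3.symm]
  simp_rw [hptw]
  have hmeasA : ∀ p : (Fin (2^b) × Fin (2^b)) × Fin (2^b),
      MeasurableSet {ω | h ω x = p.1.1 ∧ h ω y = p.1.2 ∧ h ω z = p.2} :=
    fun p => ((hmeas x) (measurableSet_singleton p.1.1)).inter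
      (((hmeas y) (measurableSet_singleton p.1.2)).inter
        ((hmeas z) (measurableSet_singleton p.2)))
  have hind : ∀ p : (Fin (2^b) × Fin (2^b)) × Fin (2^b),
      (fun ω => if h ω x = p.1.1 ∧ h ω y = p.1.2 ∧ h ω z = p.2 then g p.1.1 p.1.2 p.2 else 0) =
        Set.indicator {ω | h ω x = p.1.1 ∧ h ω y = p.1.2 ∧ h ω z = p.2}
          (fun _ => g p.1.1 p.1.2 p.2) := by
    intro p
    funext ω
    rw [Set.indicator_apply]
    rfl
  rw [integral_finset_sum]
  · have hterm : ∀ p : (Fin (2^b) × Fin (2^b)) × Fin (2^b),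
        (∫ ω, if h ω x = p.1.1 ∧ h ω y = p.1.2 ∧ h ω z = p.2 then g p.1.1 p.1.2 p.2 else 0) =
          ((2^b : ℝ))⁻¹ ^ 3 * g p.1.1 p.1.2 p.2 := by
      intro p
      rw [hind p, integral_indicator_const _ (hmeasA p)]
      have hset : {ω | h ω x = p.1.1 ∧ h ω y = p.1.2 ∧ h ω z = p.2} =
          {ω | ∀ m : Fin 3, h ω (![x, y, z] m) = ![p.1.1, p.1.2, p.2] m} := by
        ext ω
        simp [Fin.forall_fin_succ, Fin.forall_fin_two, and_assoc]
      rw [hset, measureReal_def, huniv 3 (by norm_num) ![x, y, z] (inj3 hxy hxz hyz) ![p.1.1, p.1.2, p.2],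
        toReal_pow_inv b 3, smul_eq_mul]
    rw [Finset.sum_congr rfl (fun p _ => hterm p), ← Finset.mul_sum]
    congr 1
    rw [Fintype.sum_prod_type, Fintype.sum_prod_type]
  · intro p _
    rw [hind p]
    exact (integrable_const _).indicator (hmeasA p)

lemma integral_quad (hmeas : ∀ x : Fin u, Measurable fun ω => h ω x)
    (huniv : ∀ j : ℕ, j ≤ 4 → ∀ x : Fin j → Fin u, Function.Injective x →
      ∀ y : Fin j → Fin (2 ^ b),
        ℙ {ω | ∀ m : Fin j, h ω (x m) = y m} = ((2 ^ b : ℕ) : ENNReal)⁻¹ ^ j)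
    {x y z w : Fin u} (hxy : x ≠ y) (hxz : x ≠ z) (hxw : x ≠ w)
    (hyz : y ≠ z) (hyw : y ≠ w) (hzw : z ≠ w)
    (g : Fin (2^b) → Fin (2^b) → Fin (2^b) → Fin (2^b) → ℝ) :
    ∫ ω, g (h ω x) (h ω y) (h ω z) (h ω w)
      = ((2^b : ℝ))⁻¹ ^ 4 * ∑ a : Fin (2^b), ∑ c : Fin (2^b), ∑ e : Fin (2^b),
          ∑ d : Fin (2^b), g a c e d := by
  have hptw : ∀ ω, g (h ω x) (h ω y) (h ω z) (h ω w) =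
      ∑ p : ((Fin (2^b) × Fin (2^b)) × Fin (2^b)) × Fin (2^b),
        (if h ω x = p.1.1.1 ∧ h ω y = p.1.1.2 ∧ h ω z = p.1.2 ∧ h ω w = p.2
          then g p.1.1.1 p.1.1.2 p.1.2 p.2 else 0) := by
    intro ω
    rw [Finset.sum_eq_single_of_mem (((h ω x, h ω y), h ω z), h ω w) (Finset.mem_univ _)]
    · simp
    · intro p _ hne
      rw [if_neg]
      rintro ⟨h1, h2, h3, h4⟩
      apply hne
      apply Prod.ext
      · apply Prod.ext
        · apply Prod.ext <;> simp [h1.symm, h2.symm]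
        · simp [h3.symm]
      · simp [h4.symm]
  simp_rw [hptw]
  have hmeasA : ∀ p : ((Fin (2^b) × Fin (2^b)) × Fin (2^b)) × Fin (2^b),
      MeasurableSet {ω | h ω x = p.1.1.1 ∧ h ω y = p.1.1.2 ∧ h ω z = p.1.2 ∧ h ω w = p.2} :=
    fun p => ((hmeas x) (measurableSet_singleton p.1.1.1)).inter
      (((hmeas y) (measurableSet_singleton p.1.1.2)).inter
        (((hmeas z) (measurableSet_singleton p.1.2)).inter
          ((hmeas w) (measurableSet_singleton p.2))))
  have hind : ∀ p : ((Fin (2^b) × Fin (2^b)) × Fin (2^b)) × Fin (2^b),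
      (fun ω => if h ω x = p.1.1.1 ∧ h ω y = p.1.1.2 ∧ h ω z = p.1.2 ∧ h ω w = p.2
          then g p.1.1.1 p.1.1.2 p.1.2 p.2 else 0) =
        Set.indicator {ω | h ω x = p.1.1.1 ∧ h ω y = p.1.1.2 ∧ h ω z = p.1.2 ∧ h ω w = p.2}
          (fun _ => g p.1.1.1 p.1.1.2 p.1.2 p.2) := by
    intro p
    funext ω
    rw [Set.indicator_apply]
    rfl
  rw [integral_finset_sum]
  · have hterm : ∀ p : ((Fin (2^b) × Fin (2^b)) × Fin (2^b)) × Fin (2^b),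
        (∫ ω, if h ω x = p.1.1.1 ∧ h ω y = p.1.1.2 ∧ h ω z = p.1.2 ∧ h ω w = p.2
          then g p.1.1.1 p.1.1.2 p.1.2 p.2 else 0) =
          ((2^b : ℝ))⁻¹ ^ 4 * g p.1.1.1 p.1.1.2 p.1.2 p.2 := by
      intro p
      rw [hind p, integral_indicator_const _ (hmeasA p)]
      have hset : {ω | h ω x = p.1.1.1 ∧ h ω y = p.1.1.2 ∧ h ω z = p.1.2 ∧ h ω w = p.2} =
          {ω | ∀ m : Fin 4, h ω (![x, y, z, w] m) = ![p.1.1.1, p.1.1.2, p.1.2, p.2] m} := by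
        ext ω
        simp [Fin.forall_fin_succ, Fin.forall_fin_two, and_assoc]
      rw [hset, measureReal_def, huniv 4 (by norm_num) ![x, y, z, w] (inj4 hxy hxz hxw hyz hyw hzw)
        ![p.1.1.1, p.1.1.2, p.1.2, p.2], toReal_pow_inv b 4, smul_eq_mul]
    rw [Finset.sum_congr rfl (fun p _ => hterm p), ← Finset.mul_sum]
    congr 1
    rw [Fintype.sum_prod_type, Fintype.sum_prod_type, Fintype.sum_prod_type]
  · intro p _
    rw [hind p]
    exact (integrable_const _).indicator (hmeasA p)


lemma sum_SF_zero (hm : 0 < m) (h2b : 2 ^ b = 2 * m) (F : ℕ → ℝ) :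
    ∑ e : Fin (2 ^ b), Sfun m (e : ℕ) * F (Ifun r m (e : ℕ)) = 0 := by
  rw [Fin.sum_univ_eq_sum_range (fun t => Sfun m t * F (Ifun r m t)) (2^b), h2b]
  exact sum_S_mul hm F

lemma EG_zero (hmeas : ∀ x : Fin u, Measurable fun ω => h ω x)
    (huniv : ∀ j : ℕ, j ≤ 4 → ∀ x : Fin j → Fin u, Function.Injective x →
      ∀ y : Fin j → Fin (2 ^ b),
        ℙ {ω | ∀ m : Fin j, h ω (x m) = y m} = ((2 ^ b : ℕ) : ENNReal)⁻¹ ^ j)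
    (hm : 0 < m) (h2b : 2 ^ b = 2 * m)
    {x y : Fin u} (hxy : x ≠ y) :
    ∫ ω, Gfun r m (h ω x : ℕ) (h ω y : ℕ) = 0 := by
  rw [integral_pair hmeas huniv hxy (fun a c => Gfun r m (a : ℕ) (c : ℕ))]
  have hz : ∑ a : Fin (2^b), ∑ c : Fin (2^b), Gfun r m (a : ℕ) (c : ℕ) = 0 := by
    apply Finset.sum_eq_zero
    intro a _
    have hc : ∀ c : Fin (2^b), Gfun r m (a : ℕ) (c : ℕ) =
        Sfun m (c : ℕ) * ((fun t => Sfun m (a : ℕ) * (if Ifun r m (a : ℕ) = t then 1 else 0))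
          (Ifun r m (c : ℕ))) := by
      intro c
      simp only [Gfun]
      ring
    rw [Finset.sum_congr rfl (fun c _ => hc c)]
    exact sum_SF_zero (r := r) hm h2b (fun t => Sfun m (a : ℕ) *
      (if Ifun r m (a : ℕ) = t then 1 else 0))
  rw [hz, mul_zero]

lemma EGG (hmeas : ∀ x : Fin u, Measurable fun ω => h ω x)
    (huniv : ∀ j : ℕ, j ≤ 4 → ∀ x : Fin j → Fin u, Function.Injective x →
      ∀ y : Fin j → Fin (2 ^ b),
        ℙ {ω | ∀ m : Fin j, h ω (x m) = y m} = ((2 ^ b : ℕ) : ENNReal)⁻¹ ^ j)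
    (hm : 0 < m) (h2b : 2 ^ b = 2 * m)
    {x y x' y' : Fin u} (hxy : x ≠ y) (hxy' : x' ≠ y') :
    ∫ ω, Gfun r m (h ω x : ℕ) (h ω y : ℕ) * Gfun r m (h ω x' : ℕ) (h ω y' : ℕ)
      = if (x' = x ∧ y' = y) ∨ (x' = y ∧ y' = x)
          then ((2^b : ℝ))⁻¹ ^ 2 * ∑ a : Fin (2^b), ∑ c : Fin (2^b),
            (if Ifun r m (a : ℕ) = Ifun r m (c : ℕ) then (1:ℝ) else 0)
          else 0 := by
  have hGsq : ∀ a c : Fin (2^b), Gfun r m (a : ℕ) (c : ℕ) * Gfun r m (a : ℕ) (c : ℕ)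
      = (if Ifun r m (a : ℕ) = Ifun r m (c : ℕ) then (1:ℝ) else 0) := by
    intro a c
    have ha : (a : ℕ) < 2 * m := by rw [← h2b]; exact a.isLt
    have hc : (c : ℕ) < 2 * m := by rw [← h2b]; exact c.isLt
    have h1 := Sfun_sq ha
    have h2 := Sfun_sq hc
    simp only [Gfun]
    by_cases hi : Ifun r m (a : ℕ) = Ifun r m (c : ℕ)
    · rw [if_pos hi]
      nlinarith
    · rw [if_neg hi]
      ring
  by_cases hx'x : x' = x
  · by_cases hy'y : y' = y
    · rw [if_pos (Or.inl ⟨hx'x, hy'y⟩), hx'x, hy'y]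
      rw [integral_pair hmeas huniv hxy
        (fun a c => Gfun r m (a : ℕ) (c : ℕ) * Gfun r m (a : ℕ) (c : ℕ))]
      congr 1
      exact Finset.sum_congr rfl fun a _ => Finset.sum_congr rfl fun c _ => hGsq a c
    · -- keys x, y, y' distinct
      have hxy'2 : x ≠ y' := fun hc => hxy' (by rw [hx'x, hc])
      have hyy' : y ≠ y' := fun hc => hy'y hc.symm
      have hcond : ¬((x' = x ∧ y' = y) ∨ (x' = y ∧ y' = x)) := by
        rintro (⟨-, hc⟩ | ⟨hc, -⟩)
        exacts [hy'y hc, hxy (hx'x.symm.trans hc)]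
      rw [if_neg hcond]
      rw [hx'x]
      rw [integral_triple hmeas huniv hxy hxy'2 hyy'
        (fun a c e => Gfun r m (a : ℕ) (c : ℕ) * Gfun r m (a : ℕ) (e : ℕ))]
      rw [show ∑ a : Fin (2^b), ∑ c : Fin (2^b), ∑ e : Fin (2^b),
          Gfun r m (a : ℕ) (c : ℕ) * Gfun r m (a : ℕ) (e : ℕ) = 0 from ?_, mul_zero]
      apply Finset.sum_eq_zero; intro a _
      apply Finset.sum_eq_zero; intro c _
      have he : ∀ e : Fin (2^b), Gfun r m (a : ℕ) (c : ℕ) * Gfun r m (a : ℕ) (e : ℕ)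
          = Sfun m (e : ℕ) * ((fun t => Gfun r m (a : ℕ) (c : ℕ) * Sfun m (a : ℕ) *
              (if Ifun r m (a : ℕ) = t then 1 else 0)) (Ifun r m (e : ℕ))) := by
        intro e
        simp only [Gfun]
        ring
      rw [Finset.sum_congr rfl (fun e _ => he e)]
      exact sum_SF_zero (r := r) hm h2b (fun t => Gfun r m (a : ℕ) (c : ℕ) * Sfun m (a : ℕ) *
        (if Ifun r m (a : ℕ) = t then 1 else 0))
  · by_cases hx'y : x' = y
    · by_cases hy'x : y' = x
      · rw [if_pos (Or.inr ⟨hx'y, hy'x⟩), hx'y, hy'x]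
        rw [integral_pair hmeas huniv hxy
          (fun a c => Gfun r m (a : ℕ) (c : ℕ) * Gfun r m (c : ℕ) (a : ℕ))]
        congr 1
        apply Finset.sum_congr rfl; intro a _
        apply Finset.sum_congr rfl; intro c _
        have hsymm : Gfun r m (a : ℕ) (c : ℕ) * Gfun r m (c : ℕ) (a : ℕ)
            = Gfun r m (a : ℕ) (c : ℕ) * Gfun r m (a : ℕ) (c : ℕ) := by
          simp only [Gfun, eq_comm (a := Ifun r m (a : ℕ))]
          ring
        rw [hsymm, hGsq a c]
      · -- keys x, y(=x'), y' distinct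
        have hyy' : y ≠ y' := fun hc => hxy' (hx'y.trans hc)
        have hxy'2 : x ≠ y' := fun hc => hy'x hc.symm
        have hcond : ¬((x' = x ∧ y' = y) ∨ (x' = y ∧ y' = x)) := by
          rintro (⟨hc, -⟩ | ⟨-, hc⟩)
          exacts [hx'x hc, hy'x hc]
        rw [if_neg hcond]
        rw [hx'y]
        rw [integral_triple hmeas huniv hxy hxy'2 hyy'
          (fun a c e => Gfun r m (a : ℕ) (c : ℕ) * Gfun r m (c : ℕ) (e : ℕ))]
        rw [show ∑ a : Fin (2^b), ∑ c : Fin (2^b), ∑ e : Fin (2^b),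
            Gfun r m (a : ℕ) (c : ℕ) * Gfun r m (c : ℕ) (e : ℕ) = 0 from ?_, mul_zero]
        apply Finset.sum_eq_zero; intro a _
        apply Finset.sum_eq_zero; intro c _
        have he : ∀ e : Fin (2^b), Gfun r m (a : ℕ) (c : ℕ) * Gfun r m (c : ℕ) (e : ℕ)
            = Sfun m (e : ℕ) * ((fun t => Gfun r m (a : ℕ) (c : ℕ) * Sfun m (c : ℕ) *
                (if Ifun r m (c : ℕ) = t then 1 else 0)) (Ifun r m (e : ℕ))) := by
          intro e
          simp only [Gfun]
          ring
        rw [Finset.sum_congr rfl (fun e _ => he e)]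
        exact sum_SF_zero (r := r) hm h2b (fun t => Gfun r m (a : ℕ) (c : ℕ) * Sfun m (c : ℕ) *
          (if Ifun r m (c : ℕ) = t then 1 else 0))
    · -- x' ∉ {x, y}
      have hcond : ¬((x' = x ∧ y' = y) ∨ (x' = y ∧ y' = x)) := by
        rintro (⟨hc, -⟩ | ⟨hc, -⟩)
        exacts [hx'x hc, hx'y hc]
      rw [if_neg hcond]
      have hxx' : x ≠ x' := fun hc => hx'x hc.symm
      have hyx' : y ≠ x' := fun hc => hx'y hc.symm
      by_cases hy'x : y' = x
      · -- keys x, y, x' distinct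
        rw [hy'x]
        rw [integral_triple hmeas huniv hxy hxx' hyx'
          (fun a c e => Gfun r m (a : ℕ) (c : ℕ) * Gfun r m (e : ℕ) (a : ℕ))]
        rw [show ∑ a : Fin (2^b), ∑ c : Fin (2^b), ∑ e : Fin (2^b),
            Gfun r m (a : ℕ) (c : ℕ) * Gfun r m (e : ℕ) (a : ℕ) = 0 from ?_, mul_zero]
        apply Finset.sum_eq_zero; intro a _
        apply Finset.sum_eq_zero; intro c _
        have he : ∀ e : Fin (2^b), Gfun r m (a : ℕ) (c : ℕ) * Gfun r m (e : ℕ) (a : ℕ)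
            = Sfun m (e : ℕ) * ((fun t => Gfun r m (a : ℕ) (c : ℕ) * Sfun m (a : ℕ) *
                (if t = Ifun r m (a : ℕ) then 1 else 0)) (Ifun r m (e : ℕ))) := by
          intro e
          simp only [Gfun]
          ring
        rw [Finset.sum_congr rfl (fun e _ => he e)]
        exact sum_SF_zero (r := r) hm h2b (fun t => Gfun r m (a : ℕ) (c : ℕ) * Sfun m (a : ℕ) *
          (if t = Ifun r m (a : ℕ) then 1 else 0))
      · by_cases hy'y : y' = y
        · -- keys x, y, x' distinct
          rw [hy'y]
          rw [integral_triple hmeas huniv hxy hxx' hyx'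
            (fun a c e => Gfun r m (a : ℕ) (c : ℕ) * Gfun r m (e : ℕ) (c : ℕ))]
          rw [show ∑ a : Fin (2^b), ∑ c : Fin (2^b), ∑ e : Fin (2^b),
              Gfun r m (a : ℕ) (c : ℕ) * Gfun r m (e : ℕ) (c : ℕ) = 0 from ?_, mul_zero]
          apply Finset.sum_eq_zero; intro a _
          apply Finset.sum_eq_zero; intro c _
          have he : ∀ e : Fin (2^b), Gfun r m (a : ℕ) (c : ℕ) * Gfun r m (e : ℕ) (c : ℕ)
              = Sfun m (e : ℕ) * ((fun t => Gfun r m (a : ℕ) (c : ℕ) * Sfun m (c : ℕ) *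
                  (if t = Ifun r m (c : ℕ) then 1 else 0)) (Ifun r m (e : ℕ))) := by
            intro e
            simp only [Gfun]
            ring
          rw [Finset.sum_congr rfl (fun e _ => he e)]
          exact sum_SF_zero (r := r) hm h2b (fun t => Gfun r m (a : ℕ) (c : ℕ) * Sfun m (c : ℕ) *
            (if t = Ifun r m (c : ℕ) then 1 else 0))
        · -- all four distinct
          have hxy'2 : x ≠ y' := fun hc => hy'x hc.symm
          have hyy' : y ≠ y' := fun hc => hy'y hc.symm
          rw [integral_quad hmeas huniv hxy hxx' hxy'2 hyx' hyy' hxy'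
            (fun a c e d => Gfun r m (a : ℕ) (c : ℕ) * Gfun r m (e : ℕ) (d : ℕ))]
          rw [show ∑ a : Fin (2^b), ∑ c : Fin (2^b), ∑ e : Fin (2^b), ∑ d : Fin (2^b),
              Gfun r m (a : ℕ) (c : ℕ) * Gfun r m (e : ℕ) (d : ℕ) = 0 from ?_, mul_zero]
          apply Finset.sum_eq_zero; intro a _
          apply Finset.sum_eq_zero; intro c _
          apply Finset.sum_eq_zero; intro e _
          have hd : ∀ d : Fin (2^b), Gfun r m (a : ℕ) (c : ℕ) * Gfun r m (e : ℕ) (d : ℕ)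
              = Sfun m (d : ℕ) * ((fun t => Gfun r m (a : ℕ) (c : ℕ) * Sfun m (e : ℕ) *
                  (if Ifun r m (e : ℕ) = t then 1 else 0)) (Ifun r m (d : ℕ))) := by
            intro d
            simp only [Gfun]
            ring
          rw [Finset.sum_congr rfl (fun d _ => hd d)]
          exact sum_SF_zero (r := r) hm h2b (fun t => Gfun r m (a : ℕ) (c : ℕ) * Sfun m (e : ℕ) *
            (if Ifun r m (e : ℕ) = t then 1 else 0))

end Prob
end CS19
/-- Eq. (22) (two-for-one Count Sketch from uniform `b`-bit hashing, arbitrary number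
of buckets): with `b ≥ 2`, `1 ≤ r ≤ 2^(b-1)`, `h : [u] → [2^b]` 4-universal,
`j_x = h(x) mod 2^(b-1)`, `i(x) = ⌊r·j_x/2^(b-1)⌋`, `s(x) = 2⌊h(x)/2^(b-1)⌋ - 1`,
the Count Sketch estimator `X` satisfies `E[X] = F₂` and
`Var[X] ≤ 2(F₂² - F₄)(1 + (r/2^b)²)/r ≤ 2F₂²(1 + (r/2^b)²)/r`. -/
theorem stmt19
    {Ω : Type*} [MeasureSpace Ω] [IsProbabilityMeasure (ℙ : Measure Ω)]
    (b u r : ℕ) (hb : 2 ≤ b) (hr : 1 ≤ r) (hrb : r ≤ 2 ^ (b - 1))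
    (h : Ω → Fin u → Fin (2 ^ b))
    (hmeas : ∀ x : Fin u, Measurable fun ω => h ω x)
    (huniv : ∀ j : ℕ, j ≤ 4 → ∀ x : Fin j → Fin u, Function.Injective x →
      ∀ y : Fin j → Fin (2 ^ b),
        ℙ {ω | ∀ m : Fin j, h ω (x m) = y m} = ((2 ^ b : ℕ) : ENNReal)⁻¹ ^ j)
    (i : Ω → Fin u → ℕ)
    (hi : ∀ ω x, i ω x = r * ((h ω x : ℕ) % 2 ^ (b - 1)) / 2 ^ (b - 1))
    (s : Ω → Fin u → ℝ)
    (hs : ∀ ω x, s ω x = 2 * (((h ω x : ℕ) / 2 ^ (b - 1) : ℕ) : ℝ) - 1)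
    (f : Fin u → ℤ)
    (X : Ω → ℝ)
    (hX : ∀ ω, X ω = ∑ j ∈ Finset.range r,
      (∑ x : Fin u, s ω x * (f x : ℝ) * (if i ω x = j then 1 else 0)) ^ 2)
    (F₂ F₄ : ℝ) (hF₂ : F₂ = ∑ x : Fin u, (f x : ℝ) ^ 2)
    (hF₄ : F₄ = ∑ x : Fin u, (f x : ℝ) ^ 4) :
    (∫ ω, X ω) = F₂ ∧
    variance X ℙ ≤ 2 * (F₂ ^ 2 - F₄) * (1 + ((r : ℝ) / 2 ^ b) ^ 2) / r ∧
    2 * (F₂ ^ 2 - F₄) * (1 + ((r : ℝ) / 2 ^ b) ^ 2) / r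
      ≤ 2 * F₂ ^ 2 * (1 + ((r : ℝ) / 2 ^ b) ^ 2) / r := by
  classical
  open CS19 in
  set m := 2 ^ (b - 1) with hmdef
  have hm : 0 < m := pow_pos (by norm_num) _
  have h2b : 2 ^ b = 2 * m := by
    rw [hmdef, ← pow_succ']
    congr 1
    omega
  have hm' : (0:ℝ) < m := by exact_mod_cast hm
  have hr' : (0:ℝ) < r := by exact_mod_cast hr
  have h2br : (2:ℝ)^b = 2*(m:ℝ) := by exact_mod_cast congrArg (Nat.cast (R := ℝ)) h2b
  have hiI : ∀ ω x, i ω x = Ifun r m ((h ω x : ℕ)) := fun ω x => hi ω x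
  have hsS : ∀ ω x, s ω x = Sfun m ((h ω x : ℕ)) := fun ω x => hs ω x
  have hGdiag : ∀ a : Fin (2 ^ b), Gfun r m (a:ℕ) (a:ℕ) = 1 := by
    intro a
    have ha : (a:ℕ) < 2*m := by rw [← h2b]; exact a.isLt
    simp only [Gfun, if_true, mul_one]
    exact Sfun_sq ha
  set Y : Ω → ℝ := fun ω => ∑ p ∈ (Finset.univ : Finset (Fin u)).offDiag,
    (f p.1 : ℝ) * (f p.2 : ℝ) * Gfun r m ((h ω p.1 : ℕ)) ((h ω p.2 : ℕ)) with hYdef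
  -- pointwise decomposition
  have hX2 : ∀ ω, X ω = F₂ + Y ω := by
    intro ω
    rw [hX ω]
    have e1 : ∀ j : ℕ, (∑ x : Fin u, s ω x * (f x : ℝ) * (if i ω x = j then (1:ℝ) else 0))^2
        = ∑ x : Fin u, ∑ y : Fin u, (s ω x * (f x : ℝ) * (if i ω x = j then (1:ℝ) else 0)) *
            (s ω y * (f y : ℝ) * (if i ω y = j then (1:ℝ) else 0)) := by
      intro j
      rw [sq, Finset.sum_mul_sum]
    rw [Finset.sum_congr rfl (fun j _ => e1 j), Finset.sum_comm,
      Finset.sum_congr rfl (fun x (_ : x ∈ Finset.univ) => Finset.sum_comm)]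
    have e2 : ∀ x y : Fin u, ∑ j ∈ Finset.range r,
        (s ω x * (f x : ℝ) * (if i ω x = j then (1:ℝ) else 0)) *
          (s ω y * (f y : ℝ) * (if i ω y = j then (1:ℝ) else 0))
        = (f x : ℝ) * (f y : ℝ) * Gfun r m ((h ω x : ℕ)) ((h ω y : ℕ)) := by
      intro x y
      rw [Finset.sum_eq_single_of_mem (i ω x)
        (Finset.mem_range.2 (by rw [hiI]; exact Ifun_lt hr hm _))]
      · rw [if_pos rfl, hsS ω x, hsS ω y, hiI ω x, hiI ω y, Gfun]
        by_cases hc : Ifun r m ((h ω x : ℕ)) = Ifun r m ((h ω y : ℕ))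
        · rw [if_pos hc, if_pos hc.symm]; ring
        · rw [if_neg hc, if_neg (fun hcc => hc hcc.symm)]; ring
      · intro j _ hne
        rw [if_neg (fun hc => hne hc.symm)]; ring
    rw [Finset.sum_congr rfl (fun x _ => Finset.sum_congr rfl (fun y _ => e2 x y))]
    rw [← Finset.sum_product' (f := fun x y => (f x : ℝ) * (f y : ℝ) *
      Gfun r m ((h ω x : ℕ)) ((h ω y : ℕ)))]
    rw [← Finset.diag_union_offDiag (Finset.univ : Finset (Fin u)),
      Finset.sum_union (Finset.disjoint_diag_offDiag _), Finset.sum_diag]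
    congr 1
    rw [hF₂]
    apply Finset.sum_congr rfl
    intro x _
    rw [hGdiag]
    ring
  -- integrability of Y
  have hYint : Integrable Y ℙ := by
    rw [hYdef]
    apply integrable_finset_sum
    intro p _
    exact integrable_comp4 hmeas p.1 p.2 p.1 p.1
      (fun a c e d => (f p.1 : ℝ) * (f p.2 : ℝ) * Gfun r m (a:ℕ) (c:ℕ))
  have hEY : ∫ ω, Y ω = 0 := by
    simp only [hYdef]
    rw [integral_finset_sum _ (fun p _ => integrable_comp4 hmeas p.1 p.2 p.1 p.1
      (fun a c e d => (f p.1 : ℝ) * (f p.2 : ℝ) * Gfun r m (a:ℕ) (c:ℕ)))]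
    apply Finset.sum_eq_zero
    intro p hp
    have hpne : p.1 ≠ p.2 := (Finset.mem_offDiag.1 hp).2.2
    rw [integral_const_mul, EG_zero hmeas huniv hm h2b hpne, mul_zero]
  have hEX : ∫ ω, X ω = F₂ := by
    simp only [hX2]
    rw [integral_add (integrable_const F₂) hYint, integral_const, measureReal_def, measure_univ,
      ENNReal.toReal_one, one_smul, hEY, add_zero]
  -- boundedness / membership in L²
  have hGabs : ∀ a c : Fin (2^b), |Gfun r m (a:ℕ) (c:ℕ)| ≤ 1 := by
    intro a c
    have ha : (a:ℕ) < 2*m := by rw [← h2b]; exact a.isLt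
    have hc : (c:ℕ) < 2*m := by rw [← h2b]; exact c.isLt
    have hSa : |Sfun m (a:ℕ)| = 1 := by
      rcases mul_self_eq_one_iff.1 (Sfun_sq ha) with h1 | h1 <;> rw [h1] <;> norm_num
    have hSc : |Sfun m (c:ℕ)| = 1 := by
      rcases mul_self_eq_one_iff.1 (Sfun_sq hc) with h1 | h1 <;> rw [h1] <;> norm_num
    rw [Gfun, abs_mul, abs_mul, hSa, hSc, one_mul, one_mul]
    split <;> norm_num
  have hXmeas : Measurable X := by
    have hXeq : X = fun ω => F₂ + Y ω := funext hX2
    rw [hXeq, hYdef]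
    apply Measurable.add measurable_const
    apply Finset.measurable_sum
    intro p _
    exact measurable_comp4 hmeas p.1 p.2 p.1 p.1
      (fun a c e d => (f p.1 : ℝ) * (f p.2 : ℝ) * Gfun r m (a:ℕ) (c:ℕ))
  have hMem : MemLp X 2 ℙ := by
    apply MemLp.of_bound hXmeas.aestronglyMeasurable
      (|F₂| + ∑ p ∈ (Finset.univ : Finset (Fin u)).offDiag, |(f p.1 : ℝ) * (f p.2 : ℝ)|)
    filter_upwards with ω
    rw [Real.norm_eq_abs, hX2 ω]
    have h1 : |Y ω| ≤ ∑ p ∈ (Finset.univ : Finset (Fin u)).offDiag,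
        |(f p.1 : ℝ) * (f p.2 : ℝ)| := by
      rw [hYdef]
      refine le_trans (Finset.abs_sum_le_sum_abs _ _) ?_
      apply Finset.sum_le_sum
      intro p _
      rw [abs_mul, abs_mul]
      calc |(f p.1 : ℝ)| * |(f p.2 : ℝ)| * |Gfun r m ((h ω p.1 : ℕ)) ((h ω p.2 : ℕ))|
          ≤ |(f p.1 : ℝ)| * |(f p.2 : ℝ)| * 1 := by
            apply mul_le_mul_of_nonneg_left (hGabs _ _) (by positivity)
      _ = |(f p.1 : ℝ)| * |(f p.2 : ℝ)| := mul_one _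
    calc |F₂ + Y ω| ≤ |F₂| + |Y ω| := abs_add_le _ _
    _ ≤ _ := by linarith
  -- second moment of Y
  have hYsq_eq : (fun ω => Y ω ^ 2) = (fun ω =>
      ∑ p ∈ (Finset.univ : Finset (Fin u)).offDiag,
        ∑ q ∈ (Finset.univ : Finset (Fin u)).offDiag,
          ((f p.1 : ℝ) * (f p.2 : ℝ) * ((f q.1 : ℝ) * (f q.2 : ℝ))) *
            (Gfun r m ((h ω p.1 : ℕ)) ((h ω p.2 : ℕ)) *
              Gfun r m ((h ω q.1 : ℕ)) ((h ω q.2 : ℕ)))) := by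
    funext ω
    rw [hYdef]
    rw [sq, Finset.sum_mul_sum]
    apply Finset.sum_congr rfl; intro p _
    apply Finset.sum_congr rfl; intro q _
    ring
  have hprodint : ∀ p q : Fin u × Fin u,
      Integrable (fun ω => ((f p.1 : ℝ) * (f p.2 : ℝ) * ((f q.1 : ℝ) * (f q.2 : ℝ))) *
        (Gfun r m ((h ω p.1 : ℕ)) ((h ω p.2 : ℕ)) *
          Gfun r m ((h ω q.1 : ℕ)) ((h ω q.2 : ℕ)))) ℙ := by
    intro p q
    exact integrable_comp4 hmeas p.1 p.2 q.1 q.2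
      (fun a c e d => ((f p.1 : ℝ) * (f p.2 : ℝ) * ((f q.1 : ℝ) * (f q.2 : ℝ))) *
        (Gfun r m (a:ℕ) (c:ℕ) * Gfun r m (e:ℕ) (d:ℕ)))
  have hYsqint : Integrable (fun ω => Y ω ^ 2) ℙ := by
    rw [hYsq_eq]
    exact integrable_finset_sum _ (fun p _ => integrable_finset_sum _ (fun q _ => hprodint p q))
  have hEYsq : ∫ ω, Y ω ^ 2 = 2 * (((2:ℝ)^b)⁻¹ ^ 2 * ∑ a : Fin (2^b), ∑ c : Fin (2^b),
      (if Ifun r m (a:ℕ) = Ifun r m (c:ℕ) then (1:ℝ) else 0)) *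
      ∑ p ∈ (Finset.univ : Finset (Fin u)).offDiag, (f p.1 : ℝ)^2 * (f p.2 : ℝ)^2 := by
    rw [hYsq_eq]
    rw [integral_finset_sum _ (fun p _ => integrable_finset_sum _ (fun q _ => hprodint p q))]
    rw [Finset.sum_congr rfl (fun p _ => integral_finset_sum _ (fun q _ => hprodint p q))]
    have hterm : ∀ p ∈ (Finset.univ : Finset (Fin u)).offDiag,
        ∀ q ∈ (Finset.univ : Finset (Fin u)).offDiag,
        (∫ ω, ((f p.1 : ℝ) * (f p.2 : ℝ) * ((f q.1 : ℝ) * (f q.2 : ℝ))) *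
          (Gfun r m ((h ω p.1 : ℕ)) ((h ω p.2 : ℕ)) *
            Gfun r m ((h ω q.1 : ℕ)) ((h ω q.2 : ℕ))))
          = ((f p.1 : ℝ) * (f p.2 : ℝ) * ((f q.1 : ℝ) * (f q.2 : ℝ))) *
            (if (q.1 = p.1 ∧ q.2 = p.2) ∨ (q.1 = p.2 ∧ q.2 = p.1)
              then ((2:ℝ)^b)⁻¹ ^ 2 * ∑ a : Fin (2^b), ∑ c : Fin (2^b),
                (if Ifun r m (a:ℕ) = Ifun r m (c:ℕ) then (1:ℝ) else 0)
              else 0) := by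
      intro p hp q hq
      rw [integral_const_mul, EGG hmeas huniv hm h2b
        (Finset.mem_offDiag.1 hp).2.2 (Finset.mem_offDiag.1 hq).2.2]
    rw [Finset.sum_congr rfl (fun p hp => Finset.sum_congr rfl (fun q hq => hterm p hp q hq))]
    have hinner : ∀ p ∈ (Finset.univ : Finset (Fin u)).offDiag,
        ∑ q ∈ (Finset.univ : Finset (Fin u)).offDiag,
          ((f p.1 : ℝ) * (f p.2 : ℝ) * ((f q.1 : ℝ) * (f q.2 : ℝ))) *
            (if (q.1 = p.1 ∧ q.2 = p.2) ∨ (q.1 = p.2 ∧ q.2 = p.1)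
              then ((2:ℝ)^b)⁻¹ ^ 2 * ∑ a : Fin (2^b), ∑ c : Fin (2^b),
                (if Ifun r m (a:ℕ) = Ifun r m (c:ℕ) then (1:ℝ) else 0)
              else 0)
        = 2 * (((2:ℝ)^b)⁻¹ ^ 2 * ∑ a : Fin (2^b), ∑ c : Fin (2^b),
            (if Ifun r m (a:ℕ) = Ifun r m (c:ℕ) then (1:ℝ) else 0)) *
          ((f p.1 : ℝ)^2 * (f p.2 : ℝ)^2) := by
      intro p hp
      have hpne : p.1 ≠ p.2 := (Finset.mem_offDiag.1 hp).2.2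
      have hmulite : ∀ q : Fin u × Fin u,
          ((f p.1 : ℝ) * (f p.2 : ℝ) * ((f q.1 : ℝ) * (f q.2 : ℝ))) *
            (if (q.1 = p.1 ∧ q.2 = p.2) ∨ (q.1 = p.2 ∧ q.2 = p.1)
              then ((2:ℝ)^b)⁻¹ ^ 2 * ∑ a : Fin (2^b), ∑ c : Fin (2^b),
                (if Ifun r m (a:ℕ) = Ifun r m (c:ℕ) then (1:ℝ) else 0)
              else 0)
          = (if (q.1 = p.1 ∧ q.2 = p.2) ∨ (q.1 = p.2 ∧ q.2 = p.1)
              then ((f p.1 : ℝ) * (f p.2 : ℝ) * ((f q.1 : ℝ) * (f q.2 : ℝ))) *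
                (((2:ℝ)^b)⁻¹ ^ 2 * ∑ a : Fin (2^b), ∑ c : Fin (2^b),
                  (if Ifun r m (a:ℕ) = Ifun r m (c:ℕ) then (1:ℝ) else 0))
              else 0) := by
        intro q
        split <;> simp
      rw [Finset.sum_congr rfl (fun q _ => hmulite q), ← Finset.sum_filter]
      have hfe : (Finset.univ : Finset (Fin u)).offDiag.filter
          (fun q => (q.1 = p.1 ∧ q.2 = p.2) ∨ (q.1 = p.2 ∧ q.2 = p.1))
          = {p, (p.2, p.1)} := by
        ext q
        simp only [Finset.mem_filter, Finset.mem_offDiag, Finset.mem_univ, true_and,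
          Finset.mem_insert, Finset.mem_singleton, Prod.ext_iff]
        constructor
        · rintro ⟨-, (⟨h1, h2⟩ | ⟨h1, h2⟩)⟩
          exacts [Or.inl ⟨h1, h2⟩, Or.inr ⟨h1, h2⟩]
        · rintro (⟨h1, h2⟩ | ⟨h1, h2⟩)
          · exact ⟨by rw [h1, h2]; exact hpne, Or.inl ⟨h1, h2⟩⟩
          · exact ⟨by rw [h1, h2]; exact hpne.symm, Or.inr ⟨h1, h2⟩⟩
      rw [hfe, Finset.sum_pair (show p ≠ (p.2, p.1) from
        fun hc => hpne (congrArg Prod.fst hc))]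
      ring
    rw [Finset.sum_congr rfl hinner]
    exact (Finset.mul_sum _ _ _).symm
  -- variance identity
  have hSoff : ∑ p ∈ (Finset.univ : Finset (Fin u)).offDiag,
      (f p.1 : ℝ)^2 * (f p.2 : ℝ)^2 = F₂^2 - F₄ := by
    have hprod : F₂^2 = F₄ + ∑ p ∈ (Finset.univ : Finset (Fin u)).offDiag,
        (f p.1 : ℝ)^2 * (f p.2 : ℝ)^2 := by
      rw [hF₂, sq, Finset.sum_mul_sum]
      rw [← Finset.sum_product' (f := fun x y => (f x : ℝ)^2 * (f y : ℝ)^2)]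
      rw [← Finset.diag_union_offDiag (Finset.univ : Finset (Fin u)),
        Finset.sum_union (Finset.disjoint_diag_offDiag _), Finset.sum_diag]
      congr 1
      rw [hF₄]
      apply Finset.sum_congr rfl
      intro x _
      ring
    linarith
  have hSoffnn : (0:ℝ) ≤ F₂^2 - F₄ := by
    rw [← hSoff]
    apply Finset.sum_nonneg
    intro p _
    positivity
  have hvar : variance X ℙ = 2 * (((2:ℝ)^b)⁻¹ ^ 2 * ∑ a : Fin (2^b), ∑ c : Fin (2^b),
      (if Ifun r m (a:ℕ) = Ifun r m (c:ℕ) then (1:ℝ) else 0)) * (F₂^2 - F₄) := by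
    rw [variance_eq_sub hMem]
    have hXX : ℙ[X ^ 2] = ∫ ω, (X ω)^2 := rfl
    have hXX2 : ℙ[X] = ∫ ω, X ω := rfl
    rw [hXX, hXX2, hEX]
    have hptw : ∀ ω, (X ω)^2 = F₂^2 + ((2*F₂) * Y ω + Y ω ^ 2) := by
      intro ω
      rw [hX2 ω]
      ring
    simp only [hptw]
    have hint1 : Integrable (fun ω => (2*F₂) * Y ω) ℙ := hYint.const_mul _
    have hint2 : Integrable (fun ω => (2*F₂) * Y ω + Y ω ^ 2) ℙ := hint1.add hYsqint
    rw [integral_add (integrable_const _) hint2,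
      integral_add hint1 hYsqint, integral_const, measureReal_def, measure_univ,
      ENNReal.toReal_one, one_smul, integral_const_mul, hEY, hEYsq, hSoff]
    ring
  -- the probability bound
  have hpvle : ((2:ℝ)^b)⁻¹ ^ 2 * (∑ a : Fin (2^b), ∑ c : Fin (2^b),
      (if Ifun r m (a:ℕ) = Ifun r m (c:ℕ) then (1:ℝ) else 0))
      ≤ (1 + ((r : ℝ) / 2 ^ b) ^ 2) / r := by
    have hcount : ∑ a : Fin (2^b), ∑ c : Fin (2^b),
        (if Ifun r m (a:ℕ) = Ifun r m (c:ℕ) then (1:ℝ) else 0)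
        = 4 * ∑ j ∈ Finset.range r, ((Cfun r m j : ℝ))^2 := by
      rw [Fin.sum_univ_eq_sum_range (fun t => ∑ c : Fin (2^b),
        (if Ifun r m t = Ifun r m (c:ℕ) then (1:ℝ) else 0)) (2^b)]
      rw [Finset.sum_congr rfl (fun a _ => Fin.sum_univ_eq_sum_range
        (fun t => if Ifun r m a = Ifun r m t then (1:ℝ) else 0) (2^b))]
      rw [h2b]
      exact double_count hr hm
    have hCsq := sum_Cfun_sq_le (r := r) (m := m) hr hm
    rw [hcount, h2br]
    have e1 : ((2*(m:ℝ))⁻¹)^2 * (4 * ∑ j ∈ Finset.range r, ((Cfun r m j : ℝ))^2)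
        = (∑ j ∈ Finset.range r, ((Cfun r m j : ℝ))^2) / (m:ℝ)^2 := by
      field_simp
      ring
    have e2 : (1 + ((r:ℝ) / (2*(m:ℝ)))^2) / r = 1/r + r/(4*(m:ℝ)^2) := by
      field_simp
      ring
    rw [e1, e2]
    calc (∑ j ∈ Finset.range r, ((Cfun r m j : ℝ))^2) / (m:ℝ)^2
        ≤ ((m:ℝ)^2/r + r/4) / (m:ℝ)^2 := by
          apply (div_le_div_iff_of_pos_right (by positivity)).2 hCsq
    _ = 1/r + r/(4*(m:ℝ)^2) := by
          field_simp
  refine ⟨hEX, ?_, ?_⟩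
  · rw [hvar]
    calc 2 * (((2:ℝ)^b)⁻¹ ^ 2 * ∑ a : Fin (2^b), ∑ c : Fin (2^b),
          (if Ifun r m (a:ℕ) = Ifun r m (c:ℕ) then (1:ℝ) else 0)) * (F₂^2 - F₄)
        = 2 * (F₂^2 - F₄) * (((2:ℝ)^b)⁻¹ ^ 2 * ∑ a : Fin (2^b), ∑ c : Fin (2^b),
          (if Ifun r m (a:ℕ) = Ifun r m (c:ℕ) then (1:ℝ) else 0)) := by ring
    _ ≤ 2 * (F₂^2 - F₄) * ((1 + ((r : ℝ) / 2^b)^2) / r) := by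
        apply mul_le_mul_of_nonneg_left hpvle (by linarith)
    _ = 2 * (F₂^2 - F₄) * (1 + ((r : ℝ) / 2^b)^2) / r := by ring
  · have hF₄nn : (0:ℝ) ≤ F₄ := by
      rw [hF₄]
      apply Finset.sum_nonneg
      intro x _
      positivity
    have hK : (0:ℝ) ≤ 1 + ((r : ℝ) / 2^b)^2 := by positivity
    apply (div_le_div_iff_of_pos_right hr').2
    nlinarith [mul_nonneg hF₄nn hK]
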